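/- arXiv:1709.03449 — 2 statements merged into one kernel-verified Lean document; each statement's English description precedes it below -/
import Mathlib

section
/- For every integer N ≥ 3, (1/(N−1)) ∑_{w=1}^{N−1} |cot(π w/N)| < (3/π) log(3N). -/
open Real

private lemma cot_le_inv' {x : ℝ} (hx : 0 < x) (hx' : x < π) : Real.cot x ≤ 1 / x := by
  rw [Real.cot_eq_cos_div_sin]
  have hs : 0 < Real.sin x := Real.sin_pos_of_pos_of_lt_pi hx hx'
  rcases lt_or_ge x (π / 2) with h | h
  · have ht : x < Real.tan x := Real.lt_tan hx h
    have hc : 0 < Real.cos x := Real.cos_pos_of_mem_Ioo ⟨by linarith [Real.pi_pos], h⟩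
    rw [Real.tan_eq_sin_div_cos] at ht
    rw [div_le_div_iff₀ hs hx]
    have := (lt_div_iff₀ hc).mp ht
    nlinarith
  · have hc : Real.cos x ≤ 0 := Real.cos_nonpos_of_pi_div_two_le_of_le h (by linarith [Real.pi_pos])
    have : Real.cos x / Real.sin x ≤ 0 := div_nonpos_of_nonpos_of_nonneg hc hs.le
    have : 0 < 1 / x := by positivity
    linarith

private lemma cot_pi_sub' (x : ℝ) : Real.cot (π - x) = -Real.cot x := by
  rw [Real.cot_eq_cos_div_sin, Real.cot_eq_cos_div_sin, Real.cos_pi_sub, Real.sin_pi_sub,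
    neg_div]

private lemma abs_cot_le {x : ℝ} (hx : 0 < x) (hx' : x < π) :
    |Real.cot x| ≤ 1 / x + 1 / (π - x) := by
  have h1 : 0 < 1 / x := by positivity
  have h2 : 0 < 1 / (π - x) := div_pos one_pos (by linarith)
  rw [abs_le]
  constructor
  · have := cot_le_inv' (x := π - x) (by linarith) (by linarith)
    rw [cot_pi_sub'] at this
    linarith
  · have := cot_le_inv' hx hx'
    linarith

/-- For every integer `N ≥ 3`,
`(1/(N−1)) ∑_{w=1}^{N−1} |cot(πw/N)| < (3/π) log(3N)`. -/
theorem stmt14 (N : ℕ) (hN : 3 ≤ N) :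
    (1 / ((N : ℝ) - 1)) * ∑ w ∈ Finset.Icc 1 (N - 1), |Real.cot (π * w / N)|
      < (3 / π) * Real.log (3 * N) := by
  have hπ := Real.pi_pos
  have hNR : (3 : ℝ) ≤ (N : ℝ) := by exact_mod_cast hN
  have hN0 : (0 : ℝ) < N := by linarith
  -- step 1: pointwise bound
  have key : ∀ w ∈ Finset.Icc 1 (N - 1),
      |Real.cot (π * w / N)| ≤ (N / π) * (1 / (w : ℝ) + 1 / ((N : ℝ) - w)) := by
    intro w hw
    rw [Finset.mem_Icc] at hw
    have hw1 : (1 : ℝ) ≤ w := by exact_mod_cast hw.1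
    have hw2 : (w : ℝ) ≤ (N : ℝ) - 1 := by
      have : (w : ℝ) ≤ ((N - 1 : ℕ) : ℝ) := by exact_mod_cast hw.2
      rwa [Nat.cast_sub (by omega), Nat.cast_one] at this
    set x := π * w / N with hx
    have hx0 : 0 < x := by positivity
    have hx1 : x < π := by
      rw [hx, div_lt_iff₀ hN0]
      nlinarith
    have := abs_cot_le hx0 hx1
    have e1 : 1 / x = (N / π) * (1 / (w : ℝ)) := by
      rw [hx]; field_simp
    have hNw : (0 : ℝ) < (N : ℝ) - w := by linarith
    have e2 : 1 / (π - x) = (N / π) * (1 / ((N : ℝ) - w)) := by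
      have hxe : π - x = π * ((N : ℝ) - w) / N := by
        rw [hx]; field_simp
      rw [hxe, one_div_div, div_mul_div_comm, mul_one]
    rw [e1, e2] at this
    linarith [this]
  -- step 2: sum bound
  have hsum1 : ∑ w ∈ Finset.Icc 1 (N - 1), |Real.cot (π * w / N)|
      ≤ ∑ w ∈ Finset.Icc 1 (N - 1), (N / π) * (1 / (w : ℝ) + 1 / ((N : ℝ) - w)) :=
    Finset.sum_le_sum key
  -- reflection: sum of 1/(N-w) equals sum of 1/w
  have hrefl : ∑ w ∈ Finset.Icc 1 (N - 1), (1 / ((N : ℝ) - w))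
      = ∑ w ∈ Finset.Icc 1 (N - 1), (1 / (w : ℝ)) := by
    apply Finset.sum_nbij' (fun w => N - w) (fun w => N - w)
    · intro a ha; rw [Finset.mem_Icc] at *; omega
    · intro a ha; rw [Finset.mem_Icc] at *; omega
    · intro a ha; rw [Finset.mem_Icc] at ha; omega
    · intro a ha; rw [Finset.mem_Icc] at ha; omega
    · intro a ha
      rw [Finset.mem_Icc] at ha
      congr 1
      rw [Nat.cast_sub (by omega)]
  have hsum2 : ∑ w ∈ Finset.Icc 1 (N - 1), (N / π) * (1 / (w : ℝ) + 1 / ((N : ℝ) - w))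
      = (2 * N / π) * ∑ w ∈ Finset.Icc 1 (N - 1), (1 / (w : ℝ)) := by
    rw [← Finset.mul_sum, Finset.sum_add_distrib, hrefl]
    ring
  -- harmonic bound
  have hharm : ∑ w ∈ Finset.Icc 1 (N - 1), (1 / (w : ℝ)) ≤ 1 + Real.log ((N : ℝ) - 1) := by
    have := harmonic_le_one_add_log (N - 1)
    rw [harmonic_eq_sum_Icc] at this
    push_cast at this
    have hc : ((N - 1 : ℕ) : ℝ) = (N : ℝ) - 1 := by
      rw [Nat.cast_sub (by omega), Nat.cast_one]
    rw [hc] at this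
    simpa [one_div] using this
  -- log 3 > 1
  have hlog3 : (1 : ℝ) < Real.log 3 := by
    rw [show (1 : ℝ) = Real.log (Real.exp 1) by rw [Real.log_exp]]
    apply Real.log_lt_log (Real.exp_pos 1)
    linarith [Real.exp_one_lt_d9]
  have hlogN : Real.log ((N : ℝ) - 1) + Real.log 3 ≤ Real.log (3 * N) := by
    rw [← Real.log_mul (by linarith) (by norm_num)]
    apply Real.log_le_log (by nlinarith)
    nlinarith
  have hlog3N : 0 < Real.log (3 * N) := Real.log_pos (by nlinarith)
  have hlogNn : 0 ≤ Real.log ((N : ℝ) - 1) := Real.log_nonneg (by linarith)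
  -- combine
  have hS : ∑ w ∈ Finset.Icc 1 (N - 1), |Real.cot (π * w / N)|
      ≤ (2 * N / π) * (1 + Real.log ((N : ℝ) - 1)) := by
    calc _ ≤ (2 * N / π) * ∑ w ∈ Finset.Icc 1 (N - 1), (1 / (w : ℝ)) := by
            rw [← hsum2]; exact hsum1
      _ ≤ _ := by
            apply mul_le_mul_of_nonneg_left hharm (by positivity)
  have hfinal : (2 * (N : ℝ) / π) * (1 + Real.log ((N : ℝ) - 1))
      < (3 * ((N : ℝ) - 1) / π) * Real.log (3 * N) := by
    have h1 : 1 + Real.log ((N : ℝ) - 1) < Real.log (3 * N) := by linarith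
    have h2 : 2 * (N : ℝ) ≤ 3 * ((N : ℝ) - 1) := by linarith
    have h3 : 0 < 1 + Real.log ((N : ℝ) - 1) := by linarith
    have h4 : 2 * (N : ℝ) * (1 + Real.log ((N : ℝ) - 1))
        < 3 * ((N : ℝ) - 1) * Real.log (3 * N) := by nlinarith
    rw [div_mul_eq_mul_div, div_mul_eq_mul_div]
    gcongr
  have hN1 : (0 : ℝ) < (N : ℝ) - 1 := by linarith
  rw [one_div, inv_mul_lt_iff₀ hN1]
  calc ∑ w ∈ Finset.Icc 1 (N - 1), |Real.cot (π * w / N)|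
      ≤ (2 * N / π) * (1 + Real.log ((N : ℝ) - 1)) := hS
    _ < (3 * ((N : ℝ) - 1) / π) * Real.log (3 * N) := hfinal
    _ = ((N : ℝ) - 1) * ((3 / π) * Real.log (3 * N)) := by ring
end

section
/- Let F_n denote the Fibonacci numbers (F_0 = 0, F_1 = 1, F_n = F_{n−1} + F_{n−2}), let k ≥ 4, N = F_k, w = F_{k−1}, and let w' ∈ {1,…,N−1} satisfy w w' ≡ 1 (mod N). Then ∑_{h ≥ 1, N ∤ h} cot²(π h w/N)/h² = ∑_{h ≥ 1, N ∤ h} cot²(π h w'/N)/h², where both sums range over positive integers h not divisible by N. Consequently, for the optimal vertex modified Fibonacci lattice rule with generating vector (1, F_{k−1}) and N = F_k points, the mixture term in its squared worst-case error in the two-dimensional unanchored Sobolev space with weights γ₁, γ₂ equals (γ₁γ₂/(4π²N²)) ∑_{h ≥ 1, N ∤ h} cot²(π h w/N)/h². -/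
open Real

lemma cassini (n : ℕ) : (Nat.fib (n+1) : ℤ)^2 - Nat.fib (n+2) * Nat.fib n = (-1)^n := by
  induction n with
  | zero => simp
  | succ n ih =>
    have h2 : (Nat.fib (n+3) : ℤ) = Nat.fib (n+1) + Nat.fib (n+2) := by
      have := @Nat.fib_add_two (n+1); push_cast [this]; ring
    have h1 : (Nat.fib (n+2) : ℤ) = Nat.fib n + Nat.fib (n+1) := by
      have := @Nat.fib_add_two n; push_cast [this]; ring
    rw [show n+1+1 = n+2 from rfl, show n+1+2 = n+3 from rfl, h2]
    linear_combination -ih + (Nat.fib (n+2) : ℤ) * h1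

lemma cot_sq_shift (x : ℝ) (n : ℤ) : Real.cot (x + n * π) ^ 2 = Real.cot x ^ 2 := by
  rw [Real.cot_eq_cos_div_sin, Real.cot_eq_cos_div_sin, Real.sin_add_int_mul_pi,
    Real.cos_add_int_mul_pi, mul_div_mul_left _ _ (by positivity : ((-1:ℝ))^n ≠ 0)]

lemma cot_sq_neg (x : ℝ) : Real.cot (-x) ^ 2 = Real.cot x ^ 2 := by
  rw [Real.cot_eq_cos_div_sin, Real.cot_eq_cos_div_sin, Real.cos_neg, Real.sin_neg,
    div_neg, neg_sq]

/-- Let `F_n` be the Fibonacci numbers, `k ≥ 4`, `N = F_k`, `w = F_{k−1}`,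
and `w' ∈ {1,…,N−1}` with `ww' ≡ 1 (mod N)`. Then the cotangent sums for `w` and `w'`
coincide, and consequently the mixture term of the optimal vertex modified Fibonacci
lattice rule in the two-dimensional unanchored Sobolev space with weights `γ₁, γ₂` equals
`(γ₁γ₂/(4π²N²)) ∑_{h ≥ 1, N ∤ h} cot²(πhw/N)/h²`. -/
theorem stmt18 (k : ℕ) (hk : 4 ≤ k) (w' : ℕ)
    (hw'1 : 1 ≤ w') (hw'2 : w' ≤ Nat.fib k - 1)
    (hinv : (Nat.fib (k - 1) : ℤ) * (w' : ℤ) ≡ 1 [ZMOD (Nat.fib k : ℤ)])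
    (γ₁ γ₂ : ℝ) (hγ₁ : 0 < γ₁) (hγ₂ : 0 < γ₂) :
    ((∑' h : ℕ, if 1 ≤ h ∧ ¬ (Nat.fib k ∣ h) then
        Real.cot (π * h * Nat.fib (k - 1) / Nat.fib k) ^ 2 / (h : ℝ) ^ 2 else 0)
      = ∑' h : ℕ, if 1 ≤ h ∧ ¬ (Nat.fib k ∣ h) then
          Real.cot (π * h * w' / Nat.fib k) ^ 2 / (h : ℝ) ^ 2 else 0) ∧
    (γ₁ * γ₂ / (8 * π ^ 2 * (Nat.fib k : ℝ) ^ 2)) *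
        ((∑' h : ℕ, if 1 ≤ h ∧ ¬ (Nat.fib k ∣ h) then
            Real.cot (π * h * Nat.fib (k - 1) / Nat.fib k) ^ 2 / (h : ℝ) ^ 2 else 0)
          + ∑' h : ℕ, if 1 ≤ h ∧ ¬ (Nat.fib k ∣ h) then
              Real.cot (π * h * w' / Nat.fib k) ^ 2 / (h : ℝ) ^ 2 else 0)
      = (γ₁ * γ₂ / (4 * π ^ 2 * (Nat.fib k : ℝ) ^ 2)) *
          ∑' h : ℕ, if 1 ≤ h ∧ ¬ (Nat.fib k ∣ h) then
            Real.cot (π * h * Nat.fib (k - 1) / Nat.fib k) ^ 2 / (h : ℝ) ^ 2 else 0 := by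
  set N := Nat.fib k with hNdef
  have hN : 0 < N := Nat.fib_pos.mpr (by omega)
  have hNR : (N : ℝ) ≠ 0 := Nat.cast_ne_zero.mpr hN.ne'
  -- Cassini: fib(k-1)^2 ≡ (-1)^(k-2) mod fib k
  have hC : (Nat.fib (k-1) : ℤ)^2 - Nat.fib k * Nat.fib (k-2) = (-1)^(k-2) := by
    have := cassini (k-2)
    rwa [show k-2+1 = k-1 by omega, show k-2+2 = k by omega] at this
  set ε : ℤ := (-1)^(k-2) with hεdef
  have hε : ε = 1 ∨ ε = -1 := neg_one_pow_eq_or ℤ (k-2)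
  -- in ZMod N
  have hZinv : ((Nat.fib (k-1) : ℤ) : ZMod N) * ((w' : ℤ) : ZMod N) = 1 := by
    have := (ZMod.intCast_eq_intCast_iff _ _ _).mpr hinv
    push_cast at this ⊢
    rw [this]
  have hZsq : ((Nat.fib (k-1) : ℤ) : ZMod N)^2 = ((ε : ℤ) : ZMod N) := by
    have : (((Nat.fib (k-1) : ℤ)^2 - Nat.fib k * Nat.fib (k-2) : ℤ) : ZMod N) = ((ε : ℤ) : ZMod N) := by
      rw [hC]
    push_cast at this
    rw [ZMod.natCast_self] at this
    push_cast
    linear_combination this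
  have hε2 : ((ε : ℤ) : ZMod N) * ((ε : ℤ) : ZMod N) = 1 := by
    rcases hε with h | h <;> rw [h] <;> norm_num
  have hZw : ((w' : ℤ) : ZMod N) = ((ε : ℤ) : ZMod N) * ((Nat.fib (k-1) : ℤ) : ZMod N) := by
    have h1 : ((ε : ℤ) : ZMod N) * ((w' : ℤ) : ZMod N) = ((Nat.fib (k-1) : ℤ) : ZMod N) := by
      calc ((ε : ℤ) : ZMod N) * ((w' : ℤ) : ZMod N)
          = ((Nat.fib (k-1) : ℤ) : ZMod N)^2 * ((w' : ℤ) : ZMod N) := by rw [hZsq]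
        _ = ((Nat.fib (k-1) : ℤ) : ZMod N) * (((Nat.fib (k-1) : ℤ) : ZMod N) * ((w' : ℤ) : ZMod N)) := by ring
        _ = ((Nat.fib (k-1) : ℤ) : ZMod N) := by rw [hZinv, mul_one]
    calc ((w' : ℤ) : ZMod N) = (((ε : ℤ) : ZMod N) * ((ε : ℤ) : ZMod N)) * ((w' : ℤ) : ZMod N) := by
          rw [hε2, one_mul]
      _ = ((ε : ℤ) : ZMod N) * ((Nat.fib (k-1) : ℤ) : ZMod N) := by rw [mul_assoc, h1]
  -- back to an integer equation
  have hmod : (w' : ℤ) ≡ ε * Nat.fib (k-1) [ZMOD (N : ℤ)] := by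
    refine (ZMod.intCast_eq_intCast_iff _ _ _).mp ?_
    push_cast at hZw ⊢
    rw [hZw]
  obtain ⟨m, hm⟩ : ∃ m : ℤ, (w' : ℤ) = ε * Nat.fib (k-1) + m * N := by
    obtain ⟨m0, hm0⟩ := Int.ModEq.dvd hmod
    exact ⟨-m0, by linarith⟩
  -- key termwise equality
  have key : ∀ h : ℕ, Real.cot (π * h * w' / N) ^ 2 = Real.cot (π * h * Nat.fib (k-1) / N) ^ 2 := by
    intro h
    have hwR : (w' : ℝ) = (ε : ℝ) * Nat.fib (k-1) + (m : ℝ) * N := by exact_mod_cast congrArg (Int.cast : ℤ → ℝ) hm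
    rcases hε with hE | hE
    · have : π * h * w' / N = π * h * Nat.fib (k-1) / N + ((h * m : ℤ) : ℝ) * π := by
        rw [hwR, hE]; push_cast; field_simp
      rw [this, cot_sq_shift]
    · have : π * h * w' / N = -(π * h * Nat.fib (k-1) / N) + ((h * m : ℤ) : ℝ) * π := by
        rw [hwR, hE]; push_cast; field_simp
      rw [this, cot_sq_shift, cot_sq_neg]
  have hsum : (∑' h : ℕ, if 1 ≤ h ∧ ¬ (N ∣ h) then
        Real.cot (π * h * Nat.fib (k - 1) / N) ^ 2 / (h : ℝ) ^ 2 else 0)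
      = ∑' h : ℕ, if 1 ≤ h ∧ ¬ (N ∣ h) then
          Real.cot (π * h * w' / N) ^ 2 / (h : ℝ) ^ 2 else 0 := by
    refine tsum_congr fun h => ?_
    split_ifs with hc
    · rw [key h]
    · rfl
  refine ⟨hsum, ?_⟩
  rw [← hsum]
  generalize (∑' h : ℕ, if 1 ≤ h ∧ ¬ (N ∣ h) then
        Real.cot (π * h * Nat.fib (k - 1) / N) ^ 2 / (h : ℝ) ^ 2 else 0) = S
  have hπ : (π : ℝ) ≠ 0 := Real.pi_ne_zero
  field_simp
  ring
end
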